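/- Let d be a positive integer and regard the d×d nilpotent Jordan block J_d as a linear endomorphism of ℂ^d via matrix-vector multiplication. Then a d×d complex matrix T (acting on ℂ^d by matrix-vector multiplication) belongs to Col(J_d) if and only if T is invertible and upper triangular. -/

import Mathlib

open Submodule

/-- A subspace `M` is invariant under the endomorphism `A`. -/
def InvSub {V : Type*} [AddCommGroup V] [Module ℂ V] (A : V →ₗ[ℂ] V)
    (M : Submodule ℂ V) : Prop :=
  M.map A ≤ M

/-- `T ∈ Col(A)`: `T` is bijective and a subspace is `A`-invariant iff its image
under `T` is `A`-invariant. -/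
def Col {V : Type*} [AddCommGroup V] [Module ℂ V] (A T : V →ₗ[ℂ] V) : Prop :=
  Function.Bijective T ∧ ∀ M : Submodule ℂ V, InvSub A M ↔ InvSub A (M.map T)

/-- The cyclic subspace `(A)_x`, i.e. the span of `{A^n x : n ≥ 0}`. -/
def cyc {V : Type*} [AddCommGroup V] [Module ℂ V] (A : V →ₗ[ℂ] V) (x : V) :
    Submodule ℂ V :=
  Submodule.span ℂ (Set.range fun n : ℕ => (A ^ n) x)
/-- The `n × n` nilpotent Jordan block. -/
def Jmat (n : ℕ) : Matrix (Fin n) (Fin n) ℂ :=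
  Matrix.of fun i j => if (j : ℕ) = (i : ℕ) + 1 then 1 else 0

/-- The subspace of vectors supported on the first `k` coordinates. -/
noncomputable def MK (d k : ℕ) : Submodule ℂ (Fin d → ℂ) where
  carrier := {x | ∀ i : Fin d, k ≤ (i : ℕ) → x i = 0}
  add_mem' := by intro a b ha hb i hi; simp [ha i hi, hb i hi]
  zero_mem' := by intro i hi; rfl
  smul_mem' := by intro c a ha i hi; simp [ha i hi]

lemma mem_MK {d k : ℕ} {x : Fin d → ℂ} :
    x ∈ MK d k ↔ ∀ i : Fin d, k ≤ (i : ℕ) → x i = 0 := Iff.rfl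

lemma J_apply {d : ℕ} (x : Fin d → ℂ) (i : Fin d) :
    (Jmat d).mulVecLin x i = if h : (i : ℕ) + 1 < d then x ⟨(i : ℕ) + 1, h⟩ else 0 := by
  rw [Matrix.mulVecLin_apply]
  show (∑ j, Jmat d i j * x j) = _
  simp only [Jmat, Matrix.of_apply, ite_mul, one_mul, zero_mul]
  split
  · next h =>
    rw [Finset.sum_eq_single (⟨(i : ℕ) + 1, h⟩ : Fin d)]
    · simp
    · intro b _ hb; rw [if_neg]; intro hc; exact hb (Fin.ext hc)
    · simp
  · next h =>
    apply Finset.sum_eq_zero; intro b _; rw [if_neg]; intro hc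
    exact h (hc ▸ b.isLt)

lemma MK_inv {d : ℕ} (k : ℕ) : InvSub (Jmat d).mulVecLin (MK d k) := by
  intro y hy
  obtain ⟨x, hx, rfl⟩ := hy
  intro i hi
  rw [J_apply]
  split
  · exact hx _ (le_trans hi (Nat.le_succ _))
  · rfl

lemma tri_maps {d : ℕ} {T : Matrix (Fin d) (Fin d) ℂ}
    (hT : ∀ i j : Fin d, (j : ℕ) < (i : ℕ) → T i j = 0) (k : ℕ) :
    (MK d k).map T.mulVecLin ≤ MK d k := by
  rintro y ⟨x, hx, rfl⟩ i hi
  rw [Matrix.mulVecLin_apply]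
  show (∑ j, T i j * x j) = 0
  apply Finset.sum_eq_zero
  intro j _
  by_cases hj : k ≤ (j : ℕ)
  · rw [hx j hj, mul_zero]
  · rw [hT i j (lt_of_lt_of_le (not_le.mp hj) hi), zero_mul]

/-- Classification of invariant subspaces of the Jordan block. -/
lemma inv_classify {d : ℕ} {M : Submodule ℂ (Fin d → ℂ)}
    (hM : InvSub (Jmat d).mulVecLin M) : ∃ k ≤ d, M = MK d k := by
  classical
  have hex : ∃ k : ℕ, M ≤ MK d k := ⟨d, fun x _ i hi => absurd i.isLt (not_lt.mpr hi)⟩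
  set k := Nat.find hex with hk
  have hMk : M ≤ MK d k := Nat.find_spec hex
  have hMK0 : MK d 0 ≤ M := by
    intro z hz
    have : z = 0 := funext fun i => hz i (Nat.zero_le _)
    rw [this]; exact M.zero_mem
  rcases Nat.eq_zero_or_pos k with h0 | hpos
  · exact ⟨k, h0 ▸ Nat.zero_le d, le_antisymm hMk (h0 ▸ hMK0)⟩
  -- k ≥ 1 : find x ∈ M with x (k-1) ≠ 0
  have hmin : ¬ M ≤ MK d (k - 1) := Nat.find_min hex (Nat.sub_lt hpos one_pos)
  obtain ⟨x, hxM, hx⟩ : ∃ x ∈ M, ¬ x ∈ MK d (k - 1) := by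
    by_contra h
    push_neg at h
    exact hmin h
  rw [mem_MK] at hx
  push_neg at hx
  obtain ⟨i0, hi0le, hi0ne⟩ := hx
  have hi0 : (i0 : ℕ) = k - 1 := by
    have h1 : (i0 : ℕ) < k := by
      by_contra h
      exact hi0ne (hMk hxM i0 (not_lt.mp h))
    omega
  have hkd : k ≤ d := by
    have := i0.isLt
    omega
  -- downward chain: for 1 ≤ m ≤ k, there is y ∈ M ∩ MK d (k-m+1) with y (k-m) ≠ 0
  have Q : ∀ m, 1 ≤ m → m ≤ k →
      ∃ y ∈ M, y ∈ MK d (k - m + 1) ∧ ∃ h : k - m < d, y ⟨k - m, h⟩ ≠ 0 := by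
    intro m h1 h2
    induction m with
    | zero => omega
    | succ n ih =>
      rcases Nat.eq_zero_or_pos n with hn0 | hn1
      · subst hn0
        refine ⟨x, hxM, ?_, ?_⟩
        · intro i hi
          exact hMk hxM i (by omega)
        · refine ⟨by omega, ?_⟩
          have : (⟨k - 1, by omega⟩ : Fin d) = i0 := Fin.ext (by simp only [Fin.val_mk]; omega)
          rw [this]; exact hi0ne
      · obtain ⟨y, hyM, hyMK, hlt, hy⟩ := ih hn1 (by omega)
        refine ⟨(Jmat d).mulVecLin y, hM ⟨y, hyM, rfl⟩, ?_, ?_⟩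
        · intro i hi
          rw [J_apply]
          split
          · next hcase => exact hyMK _ (by simp only [Fin.val_mk]; omega)
          · rfl
        · refine ⟨by omega, ?_⟩
          rw [J_apply]
          rw [dif_pos (by simp only [Fin.val_mk]; omega :
            (((⟨k - (n+1), by omega⟩ : Fin d) : ℕ) + 1 < d))]
          have : (⟨((⟨k - (n+1), by omega⟩ : Fin d) : ℕ) + 1, by simp only [Fin.val_mk]; omega⟩ : Fin d)
              = ⟨k - n, hlt⟩ := Fin.ext (by simp only [Fin.val_mk]; omega)
          rw [this]; exact hy
  -- upward induction: MK d j ≤ M for all j ≤ k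
  have R : ∀ j, j ≤ k → MK d j ≤ M := by
    intro j
    induction j with
    | zero => intro _; exact hMK0
    | succ n ih =>
      intro hnk
      have hn : MK d n ≤ M := ih (by omega)
      obtain ⟨y, hyM, hyMK, hlt, hy⟩ := Q (k - n) (by omega) (by omega)
      have hnd : n < d := by
        have := hlt; omega
      have hy' : y ⟨n, hnd⟩ ≠ 0 := by
        have heq : (⟨k - (k - n), hlt⟩ : Fin d) = ⟨n, hnd⟩ :=
          Fin.ext (by simp only [Fin.val_mk]; omega)
        rwa [heq] at hy
      have hyMK' : ∀ i : Fin d, n + 1 ≤ (i : ℕ) → y i = 0 := by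
        intro i hi
        exact hyMK i (by omega)
      intro z hz
      set c : ℂ := z ⟨n, hnd⟩ / y ⟨n, hnd⟩ with hc
      have hsub : z - c • y ∈ MK d n := by
        intro i hi
        rcases eq_or_lt_of_le hi with heq | hgt
        · have hieq : i = ⟨n, hnd⟩ := Fin.ext heq.symm
          subst hieq
          simp only [Pi.sub_apply, Pi.smul_apply, smul_eq_mul, hc]
          field_simp
          ring
        · simp only [Pi.sub_apply, Pi.smul_apply, smul_eq_mul]
          rw [hz i hgt, hyMK' i hgt, mul_zero, sub_zero]
      have hzeq : z = (z - c • y) + c • y := by ring_nf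
      rw [hzeq]
      exact M.add_mem (hn hsub) (M.smul_mem c hyM)
  exact ⟨k, hkd, le_antisymm hMk (R k le_rfl)⟩

/-- Extension-by-zero map, used to compute the rank of `MK d k`. -/
def extL (d k : ℕ) : (Fin k → ℂ) →ₗ[ℂ] (Fin d → ℂ) where
  toFun x := fun i => if h : (i : ℕ) < k then x ⟨i, h⟩ else 0
  map_add' a b := by funext i; by_cases h : (i : ℕ) < k <;> simp [h]
  map_smul' c a := by funext i; by_cases h : (i : ℕ) < k <;> simp [h]

lemma MK_finrank {d k : ℕ} (hk : k ≤ d) : Module.finrank ℂ (MK d k) = k := by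
  have hinj : Function.Injective (extL d k) := by
    intro a b hab
    funext j
    have := congr_fun hab ⟨(j : ℕ), lt_of_lt_of_le j.isLt hk⟩
    simpa [extL, j.isLt] using this
  have hrange : LinearMap.range (extL d k) = MK d k := by
    apply le_antisymm
    · rintro _ ⟨x, rfl⟩ i hi
      simp [extL, not_lt.mpr hi]
    · intro z hz
      refine ⟨fun j => z ⟨(j : ℕ), lt_of_lt_of_le j.isLt hk⟩, ?_⟩
      funext i
      by_cases h : (i : ℕ) < k
      · simp [extL, h]
      · simp [extL, h, hz i (not_lt.mp h)]
  rw [← hrange, LinearMap.finrank_range_of_inj hinj, Module.finrank_fin_fun]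

lemma MK_inj {d k k' : ℕ} (hk : k ≤ d) (hk' : k' ≤ d) (h : MK d k = MK d k') :
    k = k' := by
  have := MK_finrank hk
  rw [h, MK_finrank hk'] at this
  omega

theorem stmt18 (d : ℕ) (hd : 0 < d) (T : Matrix (Fin d) (Fin d) ℂ) :
    Col (Jmat d).mulVecLin T.mulVecLin ↔
      IsUnit T ∧ ∀ i j : Fin d, (j : ℕ) < (i : ℕ) → T i j = 0 := by
  constructor
  · rintro ⟨hbij, hlat⟩
    have hinjvec : Function.Injective T.mulVec := by
      intro a b hab
      exact hbij.injective (by simpa [Matrix.mulVecLin_apply] using hab)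
    have hU : IsUnit T := Matrix.mulVec_injective_iff_isUnit.mp hinjvec
    refine ⟨hU, ?_⟩
    -- T maps MK d k to MK d k for all k ≤ d
    have hmap : ∀ k ≤ d, (MK d k).map T.mulVecLin = MK d k := by
      intro k hk
      have hinv : InvSub (Jmat d).mulVecLin ((MK d k).map T.mulVecLin) :=
        (hlat (MK d k)).mp (MK_inv k)
      obtain ⟨k', hk', heq⟩ := inv_classify hinv
      have hfr : Module.finrank ℂ ((MK d k).map T.mulVecLin) = k := by
        rw [← ((MK d k).equivMapOfInjective T.mulVecLin hbij.injective).finrank_eq]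
        exact MK_finrank hk
      rw [heq, MK_finrank hk'] at hfr
      rw [heq, hfr]
    intro i j hij
    have hj1 : (j : ℕ) + 1 ≤ d := by have := i.isLt; omega
    have hsingle : (Pi.single j 1 : Fin d → ℂ) ∈ MK d ((j : ℕ) + 1) := by
      intro l hl
      apply Pi.single_eq_of_ne
      intro hc
      subst hc
      omega
    have hmem : T.mulVecLin (Pi.single j 1) ∈ MK d ((j : ℕ) + 1) := by
      rw [← hmap _ hj1]
      exact ⟨_, hsingle, rfl⟩
    have := hmem i (by omega)
    rw [Matrix.mulVecLin_apply, Matrix.mulVec_single_one] at this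
    simpa using this
  · rintro ⟨hU, hT⟩
    haveI := hU.invertible
    have hdet : IsUnit T.det := (Matrix.isUnit_iff_isUnit_det T).mp hU
    have hTinv : ∀ i j : Fin d, (j : ℕ) < (i : ℕ) → T⁻¹ i j = 0 := by
      have hbt : T.BlockTriangular (id : Fin d → Fin d) := by
        intro i j h
        exact hT i j (Fin.lt_def.mp h)
      have := Matrix.blockTriangular_inv_of_blockTriangular hbt
      intro i j hij
      exact this (show (id j : Fin d) < id i from Fin.lt_def.mpr hij)
    have hTTi : T * T⁻¹ = 1 := Matrix.mul_nonsing_inv T hdet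
    have hTiT : T⁻¹ * T = 1 := Matrix.nonsing_inv_mul T hdet
    have hli : T⁻¹.mulVecLin ∘ₗ T.mulVecLin = LinearMap.id := by
      rw [← Matrix.mulVecLin_mul, hTiT, Matrix.mulVecLin_one]
    have hri : T.mulVecLin ∘ₗ T⁻¹.mulVecLin = LinearMap.id := by
      rw [← Matrix.mulVecLin_mul, hTTi, Matrix.mulVecLin_one]
    have hbij : Function.Bijective T.mulVecLin := by
      constructor
      · intro a b hab
        have := congr_arg T⁻¹.mulVecLin hab
        simpa [← LinearMap.comp_apply, hli] using this
      · intro y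
        have hy : T.mulVecLin (T⁻¹.mulVecLin y) = y := by
          simpa [← LinearMap.comp_apply] using congr_fun (congr_arg DFunLike.coe hri) y
        exact ⟨T⁻¹.mulVecLin y, hy⟩
    -- T maps MK d k onto MK d k
    have hmap : ∀ k, (MK d k).map T.mulVecLin = MK d k := by
      intro k
      apply le_antisymm (tri_maps hT k)
      intro z hz
      refine ⟨T⁻¹.mulVecLin z, tri_maps hTinv k ⟨z, hz, rfl⟩, ?_⟩
      simpa [← LinearMap.comp_apply] using congr_fun (congr_arg DFunLike.coe hri) z
    refine ⟨hbij, fun M => ?_⟩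
    constructor
    · intro hMinv
      obtain ⟨k, _, rfl⟩ := inv_classify hMinv
      rw [hmap k]
      exact MK_inv k
    · intro hMinv
      obtain ⟨k, _, heq⟩ := inv_classify hMinv
      have hM : M = MK d k := by
        have h1 : (M.map T.mulVecLin).map T⁻¹.mulVecLin = M := by
          rw [← Submodule.map_comp, hli, Submodule.map_id]
        have h2 : (MK d k).map T⁻¹.mulVecLin = MK d k := by
          apply le_antisymm (tri_maps hTinv k)
          intro z hz
          refine ⟨T.mulVecLin z, tri_maps hT k ⟨z, hz, rfl⟩, ?_⟩
          simpa [← LinearMap.comp_apply] using congr_fun (congr_arg DFunLike.coe hli) z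
        rw [← h1, heq, h2]
      rw [hM]
      exact MK_inv k
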